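/- Second-order Landauer inequality: under the same majorization ω ≻ υ as in the Landauer setup, one has (n ln 2 + 1)^2 ≥ (S(r) + 1)^2 + C(r), where C(r) is the varentropy of r. -/

import Mathlib

/-- `l` majorizes `m`: for each `k`, the sum of the `k` largest entries of `m` is at most
the sum of the `k` largest entries of `l` (phrased via subsets of each cardinality). -/
def Majorizes {ι : Type*} [Fintype ι] (l m : ι → ℝ) : Prop :=
  ∀ A : Finset ι, ∃ B : Finset ι, B.card = A.card ∧ ∑ i ∈ A, m i ≤ ∑ i ∈ B, l i

/-- Shannon entropy in nats. -/
noncomputable def entropy {d : ℕ} (ν : Fin d → ℝ) : ℝ :=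
  -∑ i, ν i * Real.log (ν i)

/-- Varentropy (variance of the modular Hamiltonian `-ln ν`). -/
noncomputable def varentropy {d : ℕ} (ν : Fin d → ℝ) : ℝ :=
  (∑ i, ν i * (Real.log (ν i)) ^ 2) - (entropy ν) ^ 2

noncomputable def gfun (x : ℝ) : ℝ := x * (1 - Real.log x) ^ 2

lemma gfun_hasDerivAt {x : ℝ} (hx : 0 < x) :
    HasDerivAt gfun ((Real.log x) ^ 2 - 1) x := by
  have h1 : HasDerivAt (fun y : ℝ => 1 - Real.log y) (-x⁻¹) x :=
    (Real.hasDerivAt_log hx.ne').const_sub 1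
  have h2 : HasDerivAt (fun y : ℝ => (1 - Real.log y) ^ 2)
      (2 * (1 - Real.log x) ^ 1 * (-x⁻¹)) x := h1.pow 2
  have h3 := (hasDerivAt_id x).mul h2
  refine h3.congr_deriv ?_
  have hx0 : x ≠ 0 := hx.ne'
  simp only [id, pow_one, one_mul]
  field_simp
  ring

lemma gfun_concave : ConcaveOn ℝ (Set.Ioc 0 1) gfun := by
  have hInt : interior (Set.Ioc (0:ℝ) 1) = Set.Ioo 0 1 := interior_Ioc
  apply concaveOn_of_hasDerivWithinAt2_nonpos (f' := fun x => (Real.log x)^2 - 1)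
      (f'' := fun x => 2 * Real.log x / x) (convex_Ioc 0 1)
  · intro x hx
    exact ((continuous_id.continuousAt.mul
      (((Real.continuousAt_log hx.1.ne').const_sub 1).pow 2))).continuousWithinAt
  · intro x hx
    rw [hInt] at hx
    exact (gfun_hasDerivAt hx.1).hasDerivWithinAt
  · intro x hx
    rw [hInt] at hx
    have h1 := ((Real.hasDerivAt_log hx.1.ne').pow 2).sub_const 1
    have : HasDerivAt (fun y : ℝ => (Real.log y)^2 - 1) (2 * Real.log x / x) x := by
      refine h1.congr_deriv ?_
      norm_num [div_eq_mul_inv]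
    exact this.hasDerivWithinAt
  · intro x hx
    rw [hInt] at hx
    have hl : Real.log x ≤ 0 := Real.log_nonpos hx.1.le hx.2.le
    have := hx.1
    exact div_nonpos_of_nonpos_of_nonneg (by nlinarith) hx.1.le

lemma gfun_sum_le {d : ℕ} (r : Fin d → ℝ) (hr0 : ∀ i, 0 < r i) (hr1 : ∑ i, r i = 1)
    (hd : 0 < d) : ∑ i, gfun (r i) ≤ (1 + Real.log d) ^ 2 := by
  have hd' : (0:ℝ) < d := Nat.cast_pos.mpr hd
  have hrle : ∀ i, r i ≤ 1 := by
    intro i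
    rw [← hr1]
    exact Finset.single_le_sum (fun j _ => (hr0 j).le) (Finset.mem_univ i)
  have hjen := gfun_concave.le_map_sum (t := Finset.univ) (w := fun _ : Fin d => (d:ℝ)⁻¹)
    (p := r) (fun i _ => by positivity)
    (by simp [Finset.sum_const]; field_simp)
    (fun i _ => ⟨hr0 i, hrle i⟩)
  simp only [smul_eq_mul, ← Finset.mul_sum, hr1, mul_one] at hjen
  have hg : gfun ((d:ℝ)⁻¹) = (d:ℝ)⁻¹ * (1 + Real.log d) ^ 2 := by
    unfold gfun
    rw [Real.log_inv]
    ring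
  rw [hg] at hjen
  calc ∑ i, gfun (r i) = (d:ℝ) * ((d:ℝ)⁻¹ * ∑ i, gfun (r i)) := by field_simp
    _ ≤ (d:ℝ) * ((d:ℝ)⁻¹ * (1 + Real.log d) ^ 2) := by
        apply mul_le_mul_of_nonneg_left hjen hd'.le
    _ = (1 + Real.log d) ^ 2 := by field_simp

/-- Second-order Landauer inequality: under the erasure majorization `ω ≻ υ`,
`(n ln 2 + 1)^2 ≥ (S(r) + 1)^2 + C(r)`. -/
theorem landauer_second_order {d n : ℕ} (r : Fin d → ℝ)
    (hr0 : ∀ i, 0 < r i) (hr1 : ∑ i, r i = 1)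
    (i0 : Fin (2 ^ n)) (j0 : Fin d)
    (hmaj : Majorizes
      (fun ij : Fin d × Fin (2 ^ n) => if ij.2 = i0 then r ij.1 else 0)
      (fun ij : Fin d × Fin (2 ^ n) => if ij.1 = j0 then (1 : ℝ) / 2 ^ n else 0)) :
    ((n : ℝ) * Real.log 2 + 1) ^ 2 ≥ (entropy r + 1) ^ 2 + varentropy r := by
  have hd : 0 < d := by
    rcases Nat.eq_zero_or_pos d with h | h
    · subst h; simp at hr1
    · exact h
  set ω := fun ij : Fin d × Fin (2 ^ n) => if ij.2 = i0 then r ij.1 else 0 with hω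
  obtain ⟨B, hBcard, hBsum⟩ := hmaj (({j0} : Finset (Fin d)) ×ˢ (Finset.univ : Finset (Fin (2^n))))
  have hA : ∑ ij ∈ ({j0} : Finset (Fin d)) ×ˢ (Finset.univ : Finset (Fin (2^n))),
      (if ij.1 = j0 then (1:ℝ)/2^n else 0) = 1 := by
    rw [Finset.sum_product]
    simp
  have hAcard : (({j0} : Finset (Fin d)) ×ˢ (Finset.univ : Finset (Fin (2^n)))).card = 2 ^ n := by
    simp
  have hωnn : ∀ ij, 0 ≤ ω ij := by
    intro ij
    simp only [hω]
    split
    · exact (hr0 _).le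
    · exact le_rfl
  have hωtot : ∑ ij : Fin d × Fin (2^n), ω ij = 1 := by
    rw [Fintype.sum_prod_type]
    simp [hω, hr1]
  have hB1 : (1:ℝ) ≤ ∑ ij ∈ B, ω ij := hA ▸ hBsum
  have hBle : ∑ ij ∈ B, ω ij ≤ 1 :=
    hωtot ▸ Finset.sum_le_sum_of_subset_of_nonneg (Finset.subset_univ B)
      (fun i _ _ => hωnn i)
  have hcompl : ∀ ij ∉ B, ω ij = 0 := by
    have hz : ∑ ij ∈ Finset.univ \ B, ω ij = 0 := by
      have hs := Finset.sum_sdiff (f := ω) (Finset.subset_univ B)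
      rw [hωtot] at hs
      linarith
    intro ij hij
    exact (Finset.sum_eq_zero_iff_of_nonneg (fun i _ => hωnn i)).mp hz ij (by simp [hij])
  have hmem : ∀ j : Fin d, (j, i0) ∈ B := by
    intro j; by_contra h
    have h0 := hcompl (j, i0) h
    simp only [hω, if_pos rfl] at h0
    exact (hr0 j).ne' h0
  have hdle : d ≤ 2 ^ n := by
    have hc := Finset.card_le_card_of_injOn (s := (Finset.univ : Finset (Fin d))) (t := B) (fun j : Fin d => (j, i0))
      (fun j _ => hmem j) (fun a _ b _ h => (Prod.ext_iff.mp h).1)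
    simpa [hBcard, hAcard] using hc
  have hsum := gfun_sum_le r hr0 hr1 hd
  have hlogd0 : 0 ≤ Real.log d := Real.log_nonneg (by exact_mod_cast hd)
  have hlogd : Real.log d ≤ (n:ℝ) * Real.log 2 := by
    calc Real.log d ≤ Real.log (2^n) :=
          Real.log_le_log (by exact_mod_cast hd) (by exact_mod_cast hdle)
      _ = (n:ℝ) * Real.log 2 := by rw [Real.log_pow]
  have hkey : ∑ i, gfun (r i) = (entropy r + 1)^2 + varentropy r := by
    unfold gfun entropy varentropy
    have he : ∀ i : Fin d, r i * (1 - Real.log (r i))^2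
        = r i - 2*(r i * Real.log (r i)) + r i * (Real.log (r i))^2 := fun i => by ring
    rw [Finset.sum_congr rfl (fun i _ => he i), Finset.sum_add_distrib,
      Finset.sum_sub_distrib, ← Finset.mul_sum, hr1]
    simp only [entropy]
    ring
  rw [ge_iff_le, ← hkey]
  have hmono : (1 + Real.log d)^2 ≤ ((n:ℝ)*Real.log 2 + 1)^2 := by nlinarith
  linarith
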